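/- Let T ≥ 1, L ≥ 2, ε ∈ (0, 1], and d ≥ L, and let g : [0, d] → ℝ be a concave function with g(x) ≥ −√2 for all x ∈ [0, d], g(0) ≥ (2 − ε)/(4√2·T), and g(L) ≤ (2 − L² + ε)/(4√2·T). Then d ≤ max(2L, 2L·(8T + 2)/(L² − 2)). -/

import Mathlib

set_option maxHeartbeats 1000000 in
/-- The concavity estimate of Corollary 5.11: a concave function bounded below by −√2
with the stated values at 0 and L lives on an interval of length ≤ max(2L, 2L(8T+2)/(L²−2)). -/
theorem concavity_domain_bound
    (T L ε d : ℝ) (hT : 1 ≤ T) (hL : 2 ≤ L) (hε : ε ∈ Set.Ioc (0:ℝ) 1) (hd : L ≤ d)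
    (g : ℝ → ℝ)
    (hconc : ConcaveOn ℝ (Set.Icc 0 d) g)
    (hlow : ∀ x ∈ Set.Icc (0:ℝ) d, -Real.sqrt 2 ≤ g x)
    (h0 : (2 - ε) / (4 * Real.sqrt 2 * T) ≤ g 0)
    (hL' : g L ≤ (2 - L ^ 2 + ε) / (4 * Real.sqrt 2 * T)) :
    d ≤ max (2 * L) (2 * L * (8 * T + 2) / (L ^ 2 - 2)) := by
  obtain ⟨hε0, hε1⟩ := hε
  set s := Real.sqrt 2 with hsdef
  have hs : 0 < s := Real.sqrt_pos.2 (by norm_num)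
  have hs2 : s * s = 2 := Real.mul_self_sqrt (by norm_num)
  have hT0 : 0 < T := lt_of_lt_of_le one_pos hT
  have hP : 0 < 4 * s * T := by positivity
  rcases le_or_gt d (2 * L) with hcase | hcase
  · exact le_trans hcase (le_max_left _ _)
  · -- d > 2L
    have hL0 : 0 < L := by linarith
    have hd0 : 0 < d := by linarith
    have hdL : 0 < d - L := by linarith
    -- concavity at L between 0 and d
    have h0mem : (0:ℝ) ∈ Set.Icc (0:ℝ) d := by constructor <;> linarith
    have hdmem : d ∈ Set.Icc (0:ℝ) d := by constructor <;> linarith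
    have ht0 : (0:ℝ) ≤ 1 - L / d := by
      have : L / d ≤ 1 := (div_le_one hd0).2 (by linarith)
      linarith
    have ht1 : (0:ℝ) ≤ L / d := by positivity
    have hsum : (1 - L / d) + L / d = 1 := by ring
    have hcc := hconc.2 h0mem hdmem ht0 ht1 hsum
    have harg : (1 - L / d) • (0:ℝ) + (L / d) • d = L := by
      simp only [smul_eq_mul]
      field_simp
      ring
    rw [harg] at hcc
    simp only [smul_eq_mul, mul_zero, zero_add] at hcc
    -- hcc : L / d * g d ≤ g L
    -- full convex combination form: multiply by d
    have hA : (d - L) * g 0 + L * g d ≤ d * g L := by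
      have hcc' := hconc.2 h0mem hdmem ht0 ht1 hsum
      rw [harg] at hcc'
      simp only [smul_eq_mul] at hcc'
      have := mul_le_mul_of_nonneg_left hcc' (le_of_lt hd0)
      have hdne : d ≠ 0 := ne_of_gt hd0
      calc (d - L) * g 0 + L * g d
          = d * ((1 - L / d) * g 0 + L / d * g d) := by field_simp
        _ ≤ d * g L := this
    have hgd : -s ≤ g d := hlow d hdmem
    -- clear denominators in value bounds
    have hg0' : 2 - ε ≤ g 0 * (4 * s * T) := by
      have := (div_le_iff₀ hP).1 h0
      linarith
    have hgL' : g L * (4 * s * T) ≤ 2 - L ^ 2 + ε := by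
      have := (le_div_iff₀ hP).1 hL'
      linarith
    -- key estimate
    have key : (d - L) * (L ^ 2 - 2) ≤ L * (8 * T + 1) := by
      have h1 : (d - L) * (2 - ε) ≤ (d - L) * (g 0 * (4 * s * T)) :=
        mul_le_mul_of_nonneg_left hg0' (le_of_lt hdL)
      have h2 : d * (g L * (4 * s * T)) ≤ d * (2 - L ^ 2 + ε) :=
        mul_le_mul_of_nonneg_left hgL' (le_of_lt hd0)
      have h3 : ((d - L) * g 0 + L * g d) * (4 * s * T) ≤ (d * g L) * (4 * s * T) :=
        mul_le_mul_of_nonneg_right hA (le_of_lt hP)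
      have h4 : (-s) * (L * (4 * s * T)) ≤ g d * (L * (4 * s * T)) :=
        mul_le_mul_of_nonneg_right hgd (by positivity)
      have e : (-s) * (L * (4 * s * T)) = -(8 * T * L) := by
        have : (-s) * (L * (4 * s * T)) = -((s * s) * (4 * T * L)) := by ring
        rw [this, hs2]; ring
      rw [e] at h4
      nlinarith [h1, h2, h3, h4,
        mul_nonneg hd0.le (show (0:ℝ) ≤ 1 - ε by linarith),
        mul_nonneg hL0.le (show (0:ℝ) ≤ L ^ 2 - 3 + ε by nlinarith)]
    rcases le_or_gt (L ^ 2 - 2) (8 * T + 2) with hc2 | hc2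
    · refine le_trans ?_ (le_max_right _ _)
      have hL2 : 0 < L ^ 2 - 2 := by nlinarith
      rw [le_div_iff₀ hL2]
      have hA1 : L * (L ^ 2 - 2) ≤ L * (8 * T + 2) :=
        mul_le_mul_of_nonneg_left hc2 hL0.le
      linarith [key, hA1, hL0.le]
    · exfalso
      have hL2 : 0 < L ^ 2 - 2 := by nlinarith
      have p1 : 0 < (d - 2 * L) * (L ^ 2 - 2) :=
        mul_pos (by linarith) hL2
      have p2 : 0 < L * (L ^ 2 - 2 - (8 * T + 1)) :=
        mul_pos hL0 (by linarith)
      linarith [key, p1, p2]
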